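/- For every fixed w ∈ [0,1], the information-loss function p ↦ (log 2 − h(p)) − (log 2 − h(1/2 + w·(p − 1/2))) = h(1/2 + w·(p − 1/2)) − h(p) is monotone nondecreasing on the interval [1/2, 1], where h is the binary entropy. -/

import Mathlib

open Real

/-- For every fixed retained weight `w ∈ [0,1]`, the information-loss function
`p ↦ h(1/2 + w·(p − 1/2)) − h(p)` is monotone nondecreasing on `[1/2, 1]`,
where `h` is the binary entropy. -/
theorem info_loss_monotone (w : ℝ) (hw : w ∈ Set.Icc (0:ℝ) 1) :
    MonotoneOn (fun p : ℝ =>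
        Real.binEntropy (1/2 + w * (p - 1/2)) - Real.binEntropy p)
      (Set.Icc (1/2 : ℝ) 1) := by
  obtain ⟨hw0, hw1⟩ := hw
  apply monotoneOn_of_hasDerivWithinAt_nonneg (f' := fun p =>
      w * (Real.log (1 - (1/2 + w * (p - 1/2))) - Real.log (1/2 + w * (p - 1/2)))
        - (Real.log (1 - p) - Real.log p)) (convex_Icc _ _)
  · fun_prop
  · intro x hx
    rw [interior_Icc] at hx
    obtain ⟨hx1, hx2⟩ := hx
    have hq0 : (1/2 : ℝ) ≤ 1/2 + w * (x - 1/2) := by nlinarith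
    have hqx : 1/2 + w * (x - 1/2) ≤ x := by nlinarith
    have h1 : HasDerivAt (fun p : ℝ => 1/2 + w * (p - 1/2)) w x := by
      have := (((hasDerivAt_id x).sub_const (1/2)).const_mul w).const_add (1/2)
      simpa only [mul_one, id_eq] using this
    have h2 : HasDerivAt Real.binEntropy
        (Real.log (1 - (1/2 + w * (x - 1/2))) - Real.log (1/2 + w * (x - 1/2)))
        (1/2 + w * (x - 1/2)) :=
      Real.hasDerivAt_binEntropy (by linarith) (by linarith)
    have h3 : HasDerivAt Real.binEntropy (Real.log (1 - x) - Real.log x) x :=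
      Real.hasDerivAt_binEntropy (by linarith) (by linarith)
    have := ((h2.comp x h1).sub h3)
    rw [mul_comm] at this
    exact this.hasDerivWithinAt
  · intro x hx
    rw [interior_Icc] at hx
    obtain ⟨hx1, hx2⟩ := hx
    have hq0 : (1/2 : ℝ) ≤ 1/2 + w * (x - 1/2) := by nlinarith
    have hqx : 1/2 + w * (x - 1/2) ≤ x := by nlinarith
    set q : ℝ := 1/2 + w * (x - 1/2) with hqdef
    clear_value q
    have hdq : Real.log (1 - q) - Real.log q ≤ 0 := by
      have : Real.log (1 - q) ≤ Real.log q :=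
        Real.log_le_log (by linarith) (by linarith)
      linarith
    have hmono : Real.log (1 - x) - Real.log x ≤ Real.log (1 - q) - Real.log q := by
      have h1 : Real.log (1 - x) ≤ Real.log (1 - q) :=
        Real.log_le_log (by linarith) (by linarith)
      have h2 : Real.log q ≤ Real.log x :=
        Real.log_le_log (by linarith) hqx
      linarith
    nlinarith
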